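/- arXiv:0803.0491 — 2 statements merged into one kernel-verified Lean document; each statement's English description precedes it below -/
import Mathlib

section
/- For a partial permutation matrix x with one-line encoding (a_1,...,a_n), dim(T_n x) = ∑_{j=1}^n a_j and dim(x T_n) = ∑_{j: a_j ≠ 0} (n − j + 1), where T_n is the space of upper triangular n×n matrices. -/
/-- A partial permutation matrix: 0-1 entries with at most one nonzero entry
in each row and each column. -/
def IsPartialPerm {n : ℕ} {F : Type*} [Field F] (x : Matrix (Fin n) (Fin n) F) : Prop :=
  (∀ i j, x i j = 0 ∨ x i j = 1) ∧
  (∀ i j j', x i j ≠ 0 → x i j' ≠ 0 → j = j') ∧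
  (∀ i i' j, x i j ≠ 0 → x i' j ≠ 0 → i = i')

/-- The subspace of upper triangular matrices. -/
def upperT (F : Type*) [Field F] (n : ℕ) : Submodule F (Matrix (Fin n) (Fin n) F) where
  carrier := {t | ∀ i j : Fin n, j < i → t i j = 0}
  add_mem' := by
    intro a b ha hb i j hij
    simp [Matrix.add_apply, ha i j hij, hb i j hij]
  zero_mem' := by
    intro i j hij
    simp
  smul_mem' := by
    intro c a ha i j hij
    simp [Matrix.smul_apply, ha i j hij]

section
variable {n : ℕ} {F : Type*} [Field F]

def suppSub (F : Type*) [Field F] {n : ℕ} (S : Finset (Fin n × Fin n)) :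
    Submodule F (Matrix (Fin n) (Fin n) F) where
  carrier := {m | ∀ p : Fin n × Fin n, p ∉ S → m p.1 p.2 = 0}
  add_mem' := by intro a b ha hb p hp; simp [Matrix.add_apply, ha p hp, hb p hp]
  zero_mem' := by intro p hp; rfl
  smul_mem' := by intro c m hm p hp; simp [Matrix.smul_apply, hm p hp]

theorem card_lt_filter (n m : ℕ) (h : m ≤ n) :
    (Finset.univ.filter (fun i : Fin n => i.val < m)).card = m := by
  have : (Finset.univ.filter (fun i : Fin n => i.val < m)).card = (Finset.range m).card := by
    refine Finset.card_bij' (fun i _ => i.val)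
      (fun r hr => (⟨r, lt_of_lt_of_le (Finset.mem_range.mp hr) h⟩ : Fin n)) ?_ ?_ ?_ ?_
    · intro i hi; exact Finset.mem_range.mpr (Finset.mem_filter.mp hi).2
    · intro r hr; simpa using Finset.mem_range.mp hr
    · intro i hi; rfl
    · intro r hr; rfl
  rw [this, Finset.card_range]

lemma mem_suppSub {S : Finset (Fin n × Fin n)} {m : Matrix (Fin n) (Fin n) F} :
    m ∈ suppSub F S ↔ ∀ p : Fin n × Fin n, p ∉ S → m p.1 p.2 = 0 := Iff.rfl

lemma finrank_suppSub (S : Finset (Fin n × Fin n)) :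
    Module.finrank F (suppSub F S) = S.card := by
  let e : suppSub F S →ₗ[F] ({ p // p ∈ S } → F) :=
    { toFun := fun m p => (m : Matrix (Fin n) (Fin n) F) p.1.1 p.1.2
      map_add' := by intros; rfl
      map_smul' := by intros; rfl }
  have hbij : Function.Bijective e := by
    constructor
    · intro m m' hmm
      ext i j
      by_cases hp : (i, j) ∈ S
      · exact congrFun hmm ⟨(i, j), hp⟩
      · rw [m.2 (i,j) hp, m'.2 (i,j) hp]
    · intro g
      refine ⟨⟨fun i j => if hp : (i, j) ∈ S then g ⟨(i,j), hp⟩ else 0, ?_⟩, ?_⟩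
      · intro p hp
        simp [hp]
      · ext p
        exact dif_pos p.2
  rw [(LinearEquiv.ofBijective e hbij).finrank_eq,
    Module.finrank_fintype_fun_eq_card, Fintype.card_coe]

lemma mem_upperT {t : Matrix (Fin n) (Fin n) F} :
    t ∈ upperT F n ↔ ∀ i j : Fin n, j < i → t i j = 0 := Iff.rfl

variable {x : Matrix (Fin n) (Fin n) F} {a : Fin n → ℕ}
  (hone : ∀ i j, x i j ≠ 0 → x i j = 1)
  (hrow : ∀ i j j', x i j ≠ 0 → x i j' ≠ 0 → j = j')
  (hbd : ∀ j, a j ≤ n)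
  (hcode : ∀ j i : Fin n, x i j ≠ 0 ↔ a j = i.val + 1)

include hone hrow hbd hcode

lemma exists_row {j : Fin n} (hj : a j ≠ 0) : ∃ k0 : Fin n, x k0 j ≠ 0 := by
  obtain ⟨m, hm⟩ := Nat.exists_eq_succ_of_ne_zero hj
  have hmn : m < n := by have := hbd j; omega
  exact ⟨⟨m, hmn⟩, (hcode j ⟨m, hmn⟩).mpr (by simp [hm])⟩

lemma ainj : ∀ j j', a j ≠ 0 → a j = a j' → j = j' := by
  intro j j' hne heq
  obtain ⟨k, hk⟩ := exists_row hone hrow hbd hcode hne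
  have hk' : x k j' ≠ 0 := by
    rw [hcode j' k, ← heq, ← hcode j k]; exact hk
  exact hrow k j j' hk hk' 

lemma map_right :
    (upperT F n).map (LinearMap.mulRight F x) =
      suppSub F (Finset.univ.filter fun p : Fin n × Fin n => p.1.val < a p.2) := by
  apply le_antisymm
  · rintro m ⟨t, ht, rfl⟩
    intro p hp
    simp only [Finset.mem_filter, Finset.mem_univ, true_and, not_lt] at hp
    rw [LinearMap.mulRight_apply, Matrix.mul_apply]
    apply Finset.sum_eq_zero
    intro k _
    by_cases hk : x k p.2 = 0
    · simp [hk]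
    · have := (hcode p.2 k).mp hk
      have : k < p.1 := by
        apply Fin.lt_def.mpr; omega
      rw [mem_upperT.mp ht p.1 k this, zero_mul]
  · intro m hm
    refine ⟨m * x.transpose, ?_, ?_⟩
    · intro i k hk
      rw [Matrix.mul_apply]
      apply Finset.sum_eq_zero
      intro j _
      rw [Matrix.transpose_apply]
      by_cases hkj : x k j = 0
      · simp [hkj]
      · have hak := (hcode j k).mp hkj
        have : m i j = 0 := by
          apply hm (i, j)
          simp only [Finset.mem_filter, Finset.mem_univ, true_and, not_lt]
          have : k < i := hk
          rw [Fin.lt_def] at this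
          omega
        simp [this]
    · rw [LinearMap.mulRight_apply]
      ext i j
      rw [Matrix.mul_apply]
      by_cases hj : a j = 0
      · have hz : ∀ k, x k j = 0 := by
          intro k
          by_contra hc
          have := (hcode j k).mp hc; omega
        have : m i j = 0 := by
          apply hm (i, j)
          simp [hj]
        rw [this]
        apply Finset.sum_eq_zero
        intro k _; simp [hz k]
      · -- a j = k0 + 1 for some k0
        obtain ⟨k0, hk0⟩ := exists_row hone hrow hbd hcode hj
        rw [Finset.sum_eq_single k0]
        · rw [hone _ _ hk0, mul_one, Matrix.mul_apply]
          rw [Finset.sum_eq_single j]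
          · rw [Matrix.transpose_apply, hone _ _ hk0, mul_one]
          · intro j' _ hj'
            rw [Matrix.transpose_apply]
            by_cases h : x k0 j' = 0
            · simp [h]
            · exact absurd (hrow k0 j' j h hk0) hj'
          · simp
        · intro k _ hkk
          by_cases h : x k j = 0
          · simp [h]
          · exfalso
            have h1 := (hcode j k).mp h
            have h2 := (hcode j k0).mp hk0
            exact hkk (Fin.ext (by omega))
        · simp

section
variable (hcol : ∀ i i' j, x i j ≠ 0 → x i' j ≠ 0 → i = i')
include hcol

lemma map_left :
    (upperT F n).map (LinearMap.mulLeft F x) =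
      suppSub F (Finset.univ.filter fun p : Fin n × Fin n =>
        ∃ k : Fin n, a k = p.1.val + 1 ∧ k ≤ p.2) := by
  apply le_antisymm
  · rintro m ⟨t, ht, rfl⟩
    intro p hp
    simp only [Finset.mem_filter, Finset.mem_univ, true_and, not_exists, not_and] at hp
    rw [LinearMap.mulLeft_apply, Matrix.mul_apply]
    apply Finset.sum_eq_zero
    intro k _
    by_cases hk : x p.1 k = 0
    · simp [hk]
    · have hak := (hcode k p.1).mp hk
      have : ¬ k ≤ p.2 := hp k hak
      rw [mem_upperT.mp ht k p.2 (not_le.mp this), mul_zero]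
  · intro m hm
    refine ⟨x.transpose * m, ?_, ?_⟩
    · intro k j hjk
      rw [Matrix.mul_apply]
      apply Finset.sum_eq_zero
      intro i _
      rw [Matrix.transpose_apply]
      by_cases hik : x i k = 0
      · simp [hik]
      · have hak := (hcode k i).mp hik
        have hmz : m i j = 0 := by
          apply hm (i, j)
          simp only [Finset.mem_filter, Finset.mem_univ, true_and, not_exists, not_and]
          intro k' hk' hkj'
          have : k' = k := ainj hone hrow hbd hcode k' k (by omega) (by omega)
          subst this
          exact absurd hjk (not_lt.mpr hkj')
        simp [hmz]
    · rw [LinearMap.mulLeft_apply]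
      ext i j
      rw [Matrix.mul_apply]
      by_cases hrowz : ∃ k0 : Fin n, x i k0 ≠ 0
      · obtain ⟨k0, hk0⟩ := hrowz
        rw [Finset.sum_eq_single k0]
        · rw [hone _ _ hk0, one_mul, Matrix.mul_apply]
          rw [Finset.sum_eq_single i]
          · rw [Matrix.transpose_apply, hone _ _ hk0, one_mul]
          · intro i' _ hi'
            rw [Matrix.transpose_apply]
            by_cases h : x i' k0 = 0
            · simp [h]
            · exact absurd (hcol i' i k0 h hk0) hi'
          · simp
        · intro k _ hkk
          by_cases h : x i k = 0
          · simp [h]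
          · exact absurd (hrow i k k0 h hk0) hkk
        · simp
      · push_neg at hrowz
        have hmz : m i j = 0 := by
          apply hm (i, j)
          simp only [Finset.mem_filter, Finset.mem_univ, true_and, not_exists, not_and]
          intro k hk
          exact absurd ((hcode k i).mpr hk) (by simp [hrowz k])
        rw [hmz]
        apply Finset.sum_eq_zero
        intro k _
        simp [hrowz k]

end

omit hone hrow hcode in
lemma card_right :
    (Finset.univ.filter fun p : Fin n × Fin n => p.1.val < a p.2).card = ∑ j : Fin n, a j := by
  rw [Finset.card_eq_sum_card_fiberwise (f := Prod.snd) (t := Finset.univ) (fun p _ => Finset.mem_univ _)]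
  apply Finset.sum_congr rfl
  intro j _
  have hb : ((Finset.univ.filter fun p : Fin n × Fin n => p.1.val < a p.2).filter
      (fun p => p.2 = j)).card = (Finset.univ.filter fun i : Fin n => i.val < a j).card := by
    refine Finset.card_bij' (fun p _ => p.1) (fun i _ => (i, j)) ?_ ?_ ?_ ?_
    · intro p hp
      simp only [Finset.mem_filter, Finset.mem_univ, true_and] at hp ⊢
      rw [← hp.2]; exact hp.1
    · intro i hi
      simp only [Finset.mem_filter, Finset.mem_univ, true_and] at hi ⊢
      exact ⟨hi, trivial⟩
    · intro p hp
      simp only [Finset.mem_filter] at hp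
      exact Prod.ext_iff.mpr ⟨rfl, hp.2.symm⟩
    · intro i _; rfl
  rw [hb, card_lt_filter n (a j) (hbd j)]

lemma card_left :
    (Finset.univ.filter fun p : Fin n × Fin n =>
        ∃ k : Fin n, a k = p.1.val + 1 ∧ k ≤ p.2).card
      = ∑ k ∈ Finset.univ.filter (fun k : Fin n => a k ≠ 0), (n - k.val) := by
  classical
  set S := Finset.univ.filter fun p : Fin n × Fin n => ∃ k : Fin n, a k = p.1.val + 1 ∧ k ≤ p.2 with hS
  set k0 : Fin n → Fin n := fun i => if h : ∃ k : Fin n, a k = i.val + 1 then h.choose else i with hk0def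
  have hmem : ∀ p ∈ S, k0 p.1 ∈ Finset.univ.filter (fun k : Fin n => a k ≠ 0) := by
    intro p hp
    simp only [hS, Finset.mem_filter, Finset.mem_univ, true_and] at hp ⊢
    obtain ⟨k, hk, _⟩ := hp
    have h : ∃ k : Fin n, a k = p.1.val + 1 := ⟨k, hk⟩
    simp only [hk0def, dif_pos h]
    rw [h.choose_spec]; omega
  rw [Finset.card_eq_sum_card_fiberwise hmem]
  apply Finset.sum_congr rfl
  intro k hk
  simp only [Finset.mem_filter, Finset.mem_univ, true_and] at hk
  have hkn : a k - 1 < n := by have := hbd k; omega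
  set i0 : Fin n := ⟨a k - 1, hkn⟩ with hi0
  have hak : a k = i0.val + 1 := by simp [hi0]; omega
  have hfiber : (S.filter fun p => k0 p.1 = k).card = (Finset.univ.filter fun j : Fin n => k ≤ j).card := by
    refine Finset.card_bij' (fun p _ => p.2) (fun j _ => (i0, j)) ?_ ?_ ?_ ?_
    · intro p hp
      simp only [hS, Finset.mem_filter, Finset.mem_univ, true_and] at hp ⊢
      obtain ⟨⟨k', hk', hk'le⟩, hpk⟩ := hp
      have h : ∃ kk : Fin n, a kk = p.1.val + 1 := ⟨k', hk'⟩
      have hch : a (k0 p.1) = p.1.val + 1 := by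
        simp only [hk0def, dif_pos h]; exact h.choose_spec
      rw [hpk] at hch
      have : k' = k := ainj hone hrow hbd hcode k' k (by omega) (by omega)
      subst this; exact hk'le
    · intro j hj
      simp only [Finset.mem_filter, Finset.mem_univ, true_and] at hj
      simp only [hS, Finset.mem_filter, Finset.mem_univ, true_and]
      constructor
      · exact ⟨k, hak, hj⟩
      · have h : ∃ kk : Fin n, a kk = i0.val + 1 := ⟨k, hak⟩
        have hch : a (k0 i0) = i0.val + 1 := by
          simp only [hk0def, dif_pos h]; exact h.choose_spec
        exact ainj hone hrow hbd hcode (k0 i0) k (by omega) (by omega)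
    · intro p hp
      simp only [hS, Finset.mem_filter, Finset.mem_univ, true_and] at hp
      obtain ⟨⟨k', hk', _⟩, hpk⟩ := hp
      have h : ∃ kk : Fin n, a kk = p.1.val + 1 := ⟨k', hk'⟩
      have hch : a (k0 p.1) = p.1.val + 1 := by
        simp only [hk0def, dif_pos h]; exact h.choose_spec
      rw [hpk] at hch
      have : p.1 = i0 := Fin.ext (by simp [hi0]; omega)
      rw [← this]
    · intro j _; rfl
  rw [hfiber]
  have : (Finset.univ.filter fun j : Fin n => k ≤ j) = Finset.Ici k := by
    ext j; simp
  rw [this, Fin.card_Ici]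
end

theorem dim_Tx_and_xT (F : Type*) [Field F] (n : ℕ) (x : Matrix (Fin n) (Fin n) F)
    (hx : IsPartialPerm x) (a : Fin n → ℕ) (hbd : ∀ j, a j ≤ n)
    (hcode : ∀ j i : Fin n, x i j ≠ 0 ↔ a j = i.val + 1) :
    Module.finrank F ↥((upperT F n).map (LinearMap.mulRight F x)) = ∑ j : Fin n, a j ∧
    Module.finrank F ↥((upperT F n).map (LinearMap.mulLeft F x)) =
      ∑ j ∈ Finset.univ.filter (fun j : Fin n => a j ≠ 0), (n - j.val) := by
  obtain ⟨h01, hrow, hcol⟩ := hx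
  have hone : ∀ i j, x i j ≠ 0 → x i j = 1 := fun i j h => (h01 i j).resolve_left h
  constructor
  · rw [map_right hone hrow hbd hcode, finrank_suppSub, card_right hbd]
  · rw [map_left hone hrow hbd hcode hcol, finrank_suppSub, card_left hone hrow hbd hcode]
end

section
/- Let x = (a_1,...,a_n) and y = (b_1,...,b_n) be rook-monoid sequences such that for some i, a_k = b_k for k < i and b_i > a_i. If y covers x in the Deodhar order, then ℓ(y) = ℓ(x) + 1 and y is obtained from x by a single elementary Pennell-Putcha-Renner move (either raising one entry or swapping two entries to decreasing position). -/
/-- coinv: number of pairs i < j with 0 < a i < a j. -/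
def coinv (n : ℕ) (a : Fin n → ℕ) : ℕ :=
  (Finset.univ.filter (fun p : Fin n × Fin n => p.1 < p.2 ∧ 0 < a p.1 ∧ a p.1 < a p.2)).card

/-- Length of a rook-monoid sequence: ∑_{i : a_i ≠ 0} (a_i + n - i) - coinv (1-based i). -/
def rookLen (n : ℕ) (a : Fin n → ℕ) : ℤ :=
  (∑ i : Fin n, if a i ≠ 0 then ((a i : ℤ) + n - (i.val + 1)) else 0) - coinv n a

/-- A rook-monoid sequence: entries in {0,...,n} with distinct nonzero entries. -/
def IsRook (n : ℕ) (a : Fin n → ℕ) : Prop :=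
  (∀ i, a i ≤ n) ∧ ∀ i j : Fin n, i ≠ j → a i ≠ 0 → a i ≠ a j

/-- Non-increasing rearrangement of a list. -/
def sortDesc (l : List ℕ) : List ℕ := l.insertionSort (· ≥ ·)

/-- Containment order: entrywise comparison of non-increasing rearrangements. -/
def contLE (l m : List ℕ) : Prop := List.Forall₂ (· ≤ ·) (sortDesc l) (sortDesc m)

/-- Deodhar order: containment of all truncations. -/
def deodharLE (n : ℕ) (x y : Fin n → ℕ) : Prop :=
  ∀ k : ℕ, k ≤ n → contLE ((List.ofFn x).take k) ((List.ofFn y).take k)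

/-- y covers x in the Deodhar order on rook-monoid sequences. -/
def deodharCovers (n : ℕ) (x y : Fin n → ℕ) : Prop :=
  deodharLE n x y ∧ x ≠ y ∧
    ¬∃ z : Fin n → ℕ, IsRook n z ∧
      deodharLE n x z ∧ x ≠ z ∧ deodharLE n z y ∧ z ≠ y

/-- An elementary Pennell-Putcha-Renner move: raise one entry, or swap two entries
to put the larger one first. -/
def pprStep (n : ℕ) (x y : Fin n → ℕ) : Prop :=
  (∃ i : Fin n, x i < y i ∧ ∀ k, k ≠ i → x k = y k) ∨
  (∃ i j : Fin n, i < j ∧ y i = x j ∧ y j = x i ∧ x i < x j ∧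
    ∀ k, k ≠ i → k ≠ j → x k = y k)

namespace DCP

def cnt {n : ℕ} (x : Fin n → ℕ) (k t : ℕ) : ℕ :=
  (Finset.univ.filter (fun m : Fin n => m.val < k ∧ t ≤ x m)).card

lemma cnt_succ {n : ℕ} (x : Fin n → ℕ) (k t : ℕ) (hk : k < n) :
    cnt x (k+1) t = cnt x k t + (if t ≤ x ⟨k, hk⟩ then 1 else 0) := by
  unfold cnt
  rw [Finset.card_filter, Finset.card_filter]
  have key : ∀ m : Fin n, (if m.val < k+1 ∧ t ≤ x m then (1:ℕ) else 0) =
      (if m.val < k ∧ t ≤ x m then 1 else 0) + (if m = ⟨k,hk⟩ then (if t ≤ x m then 1 else 0) else 0) := by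
    intro m
    by_cases h1 : t ≤ x m
    · by_cases hm : m = (⟨k,hk⟩ : Fin n)
      · subst hm; simp [h1]
      · have hv : m.val ≠ k := fun h => hm (Fin.ext h)
        have h2 : (m.val < k + 1) = (m.val < k) := propext (by omega)
        simp [h1, hm, h2]
    · simp [h1]
  rw [Finset.sum_congr rfl (fun m _ => key m), Finset.sum_add_distrib,
    Finset.sum_ite_eq' Finset.univ (⟨k,hk⟩ : Fin n) (fun m => if t ≤ x m then 1 else 0)]
  simp

lemma countP_take_ofFn {n : ℕ} (x : Fin n → ℕ) (t : ℕ) :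
    ∀ k, k ≤ n → ((List.ofFn x).take k).countP (fun v => t ≤ v) = cnt x k t := by
  intro k
  induction k with
  | zero => intro _; simp [cnt]
  | succ k ih =>
    intro hk
    have hkn : k < n := hk
    rw [List.take_succ, List.countP_append, ih (le_of_lt hkn), cnt_succ x k t hkn]
    congr 1
    have : (List.ofFn x)[k]? = some (x ⟨k, hkn⟩) := by
      rw [List.getElem?_ofFn]; simp [List.ofFnNthVal, hkn]
    rw [this]
    by_cases h : t ≤ x ⟨k, hkn⟩ <;> simp [List.countP_cons, h]


lemma forall2_iff_counts : ∀ (A B : List ℕ), A.Pairwise (· ≥ ·) → B.Pairwise (· ≥ ·) →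
    A.length = B.length →
    (List.Forall₂ (· ≤ ·) A B ↔ ∀ t, A.countP (fun v => t ≤ v) ≤ B.countP (fun v => t ≤ v)) := by
  intro A
  induction A with
  | nil =>
    intro B _ _ hlen
    have : B = [] := List.eq_nil_of_length_eq_zero hlen.symm
    subst this; simp
  | cons x A' ih =>
    intro B hA hB hlen
    cases B with
    | nil => simp at hlen
    | cons y B' =>
      have hA' : A'.Pairwise (· ≥ ·) := hA.of_cons
      have hB' : B'.Pairwise (· ≥ ·) := hB.of_cons
      have hlen' : A'.length = B'.length := by simpa using hlen
      constructor
      · intro h t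
        rcases h with _ | ⟨hxy, h'⟩
        rw [List.countP_cons, List.countP_cons]
        have := ((ih B' hA' hB' hlen').mp h') t
        by_cases h1 : t ≤ x
        · have h2 : t ≤ y := le_trans h1 hxy
          simp [h1, h2]; omega
        · simp [h1]; omega
      · intro h
        have hxy : x ≤ y := by
          by_contra hy
          have h1 := h x
          rw [List.countP_cons, List.countP_cons] at h1
          have hB0 : B'.countP (fun v => decide (x ≤ v)) = 0 := by
            rw [List.countP_eq_zero]
            intro b hb
            have : b ≤ y := List.rel_of_pairwise_cons hB hb
            simp; omega
          simp [hy, hB0] at h1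
        refine List.Forall₂.cons hxy ((ih B' hA' hB' hlen').mpr ?_)
        intro t
        have h1 := h t
        rw [List.countP_cons, List.countP_cons] at h1
        by_cases h2 : t ≤ x
        · have h3 : t ≤ y := le_trans h2 hxy
          simp [h2, h3] at h1; omega
        · have hA0 : A'.countP (fun v => decide (t ≤ v)) = 0 := by
            rw [List.countP_eq_zero]
            intro b hb
            have : b ≤ x := List.rel_of_pairwise_cons hA hb
            simp; omega
          rw [hA0]; omega


lemma contLE_iff_counts (l m : List ℕ) (hlen : l.length = m.length) :
    contLE l m ↔ ∀ t, l.countP (fun v => t ≤ v) ≤ m.countP (fun v => t ≤ v) := by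
  unfold contLE sortDesc
  have pl := List.perm_insertionSort (α := ℕ) (· ≥ ·) l
  have pm := List.perm_insertionSort (α := ℕ) (· ≥ ·) m
  rw [forall2_iff_counts _ _ (List.pairwise_insertionSort _ l) (List.pairwise_insertionSort _ m)
    (by rw [pl.length_eq, pm.length_eq, hlen])]
  constructor
  · intro h t; rw [← pl.countP_eq, ← pm.countP_eq]; exact h t
  · intro h t; rw [pl.countP_eq, pm.countP_eq]; exact h t


lemma deodharLE_iff_cnt {n : ℕ} (x y : Fin n → ℕ) :
    deodharLE n x y ↔ ∀ k, k ≤ n → ∀ t, cnt x k t ≤ cnt y k t := by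
  unfold deodharLE
  have hlen : ∀ k, ((List.ofFn x).take k).length = ((List.ofFn y).take k).length := by
    intro k; simp
  constructor
  · intro h k hk t
    have := (contLE_iff_counts _ _ (hlen k)).mp (h k hk) t
    rwa [countP_take_ofFn x t k hk, countP_take_ofFn y t k hk] at this
  · intro h k hk
    rw [contLE_iff_counts _ _ (hlen k)]
    intro t
    rw [countP_take_ofFn x t k hk, countP_take_ofFn y t k hk]
    exact h k hk t

lemma cnt_split {n : ℕ} (x : Fin n → ℕ) (k t s : ℕ) (hts : t ≤ s) :
    cnt x k t = cnt x k s +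
      (Finset.univ.filter (fun m : Fin n => m.val < k ∧ t ≤ x m ∧ x m < s)).card := by
  unfold cnt
  rw [Finset.card_filter, Finset.card_filter, Finset.card_filter, ← Finset.sum_add_distrib]
  refine Finset.sum_congr rfl (fun m _ => ?_)
  by_cases h1 : m.val < k
  · by_cases h2 : s ≤ x m
    · have h3 : t ≤ x m := le_trans hts h2
      simp [h1, h2, h3, Nat.not_lt.mpr h2]
    · by_cases h3 : t ≤ x m
      · simp [h1, h2, h3, Nat.lt_of_not_le h2]
      · simp [h1, h2, h3]
  · simp [h1]

lemma strict_lemma {n : ℕ} (a b : Fin n → ℕ) (i : Fin n)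
    (hpre : ∀ k : Fin n, k < i → a k = b k) (hlt : a i < b i)
    (hcnt : ∀ k, k ≤ n → ∀ t, cnt a k t ≤ cnt b k t) (k t : ℕ)
    (hk1 : i.val < k) (hk2 : k ≤ n) (ht1 : a i < t) (ht2 : t ≤ b i)
    (H : ∀ m : Fin n, i < m → m.val < k → ¬(a i < a m ∧ a m ≤ b i)) :
    cnt a k t + 1 ≤ cnt b k t := by
  set s := b i + 1 with hs
  have hts : t ≤ s := by omega
  have ea := cnt_split a k t s hts
  have eb := cnt_split b k t s hts
  set Da := Finset.univ.filter (fun m : Fin n => m.val < k ∧ t ≤ a m ∧ a m < s) with hDa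
  set Db := Finset.univ.filter (fun m : Fin n => m.val < k ∧ t ≤ b m ∧ b m < s) with hDb
  have hiDb : i ∈ Db := by
    rw [hDb, Finset.mem_filter]
    exact ⟨Finset.mem_univ _, hk1, ht2, by omega⟩
  have hsub : Da ⊆ Db.erase i := by
    intro m hm
    rw [hDa, Finset.mem_filter] at hm
    obtain ⟨-, hmk, hmt, hms⟩ := hm
    have hmi : m ≠ i := by
      intro h; subst h; omega
    rw [Finset.mem_erase]
    refine ⟨hmi, ?_⟩
    rcases lt_or_gt_of_ne hmi with hlt' | hgt
    · rw [Finset.mem_filter]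
      have := hpre m hlt'
      exact ⟨Finset.mem_univ _, hmk, by omega, by omega⟩
    · exact absurd ⟨by omega, by omega⟩ (H m hgt hmk)
  have hcard : Da.card ≤ Db.card - 1 := by
    have := Finset.card_le_card hsub
    rwa [Finset.card_erase_of_mem hiDb] at this
  have hDbpos : 1 ≤ Db.card := Finset.card_pos.mpr ⟨i, hiDb⟩
  have := hcnt k hk2 s
  omega


def gz {n : ℕ} (x : Fin n → ℕ) (s t : Fin n) : ℤ :=
  if s < t ∧ 0 < x s ∧ x s < x t then 1 else 0

lemma coinv_int {n : ℕ} (x : Fin n → ℕ) :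
    (coinv n x : ℤ) = ∑ s : Fin n, ∑ t : Fin n, gz x s t := by
  unfold coinv gz
  rw [Finset.card_filter]
  push_cast
  rw [Fintype.sum_prod_type]

lemma sum_pair_outside {n : ℕ} (d : Fin n → ℤ) (p q : Fin n) (hpq : p ≠ q)
    (h : ∀ m, m ≠ p → m ≠ q → d m = 0) :
    ∑ m : Fin n, d m = d p + d q := by
  rw [← Finset.sum_pair hpq]
  exact (Finset.sum_subset (Finset.subset_univ _) (fun m _ hm => by
    simp only [Finset.mem_insert, Finset.mem_singleton, not_or] at hm
    exact h m hm.1 hm.2)).symm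


lemma coinv_swap {n : ℕ} (a : Fin n → ℕ) (ha : IsRook n a) (p q : Fin n) (hpq : p < q)
    (huc : a p < a q)
    (Hb : ∀ m : Fin n, p < m → m < q → ¬(a p < a m ∧ a m < a q))
    (Hz : a p = 0 → ∀ m : Fin n, p < m → m < q → a m ≠ 0) :
    (coinv n (fun m => a (Equiv.swap p q m)) : ℤ) - coinv n a
      = if a p = 0 then ((q.val : ℤ) - p.val - 1) else -1 := by
  set z : Fin n → ℕ := fun m => a (Equiv.swap p q m) with hz
  have hpq' : p ≠ q := ne_of_lt hpq
  have zp : z p = a q := by rw [hz]; simp [Equiv.swap_apply_left]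
  have zq : z q = a p := by rw [hz]; simp [Equiv.swap_apply_right]
  have zm : ∀ m, m ≠ p → m ≠ q → z m = a m := by
    intro m h1 h2; rw [hz]; simp [Equiv.swap_apply_of_ne_of_ne h1 h2]
  have hcq : a q ≠ 0 := by omega
  have hdp : ∀ s, s ≠ p → a s ≠ 0 → a s ≠ a p := fun s h1 h2 => ha.2 s p h1 h2
  have hdq : ∀ s, s ≠ q → a s ≠ 0 → a s ≠ a q := fun s h1 h2 => ha.2 s q h1 h2
  rw [coinv_int, coinv_int]
  rw [show (∑ s : Fin n, ∑ t : Fin n, gz z s t) - (∑ s : Fin n, ∑ t : Fin n, gz a s t)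
      = ∑ s : Fin n, ∑ t : Fin n, (gz z s t - gz a s t) by
    rw [← Finset.sum_sub_distrib]
    exact Finset.sum_congr rfl fun s _ => (Finset.sum_sub_distrib _ _).symm]
  have dzero : ∀ s t : Fin n, s ≠ p → s ≠ q → t ≠ p → t ≠ q → gz z s t - gz a s t = 0 := by
    intro s t h1 h2 h3 h4
    rw [show gz z s t = gz a s t by unfold gz; rw [zm s h1 h2, zm t h3 h4]]
    ring
  rw [sum_pair_outside _ p q hpq' ?rows]
  case rows =>
    intro s hs1 hs2
    rw [sum_pair_outside _ p q hpq' (fun t ht1 ht2 => dzero s t hs1 hs2 ht1 ht2)]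
    unfold gz
    rw [zm s hs1 hs2, zp, zq]
    have h2 : a s ≠ 0 → a s ≠ a q := fun h => hdq s hs2 h
    by_cases hsp : s < p
    · have hsq : s < q := lt_trans hsp hpq
      simp only [hsp, hsq, true_and]
      split_ifs <;> omega
    · by_cases hsq : s < q
      · have hps : p < s := by
          rcases lt_or_eq_of_le (not_lt.mp hsp) with h | h
          · exact h
          · exact absurd h.symm hs1
        have hnb := Hb s hps hsq
        simp only [hsp, hsq, false_and, if_false, true_and]
        rcases Nat.eq_zero_or_pos (a s) with h0 | h0
        · simp [h0]
        · have hne_q := h2 (by omega)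
          by_cases hp0 : a p = 0
          · split_ifs <;> omega
          · have hne_p := hdp s hs1 (by omega)
            split_ifs <;> omega
      · simp only [hsp, hsq, false_and, if_false]
        ring
  -- rows p and q
  rw [← Finset.sum_add_distrib]
  by_cases hu : a p = 0
  · have mid : ∀ t : Fin n, ((gz z p t - gz a p t) + (gz z q t - gz a q t))
        = (if p < t ∧ t < q then (1:ℤ) else 0) := by
      intro t
      by_cases ht1 : t = p
      · subst ht1; unfold gz; rw [zp, zq]; split_ifs <;> omega
      · by_cases ht2 : t = q
        · subst ht2; unfold gz; rw [zp, zq]; split_ifs <;> omega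
        · unfold gz
          rw [zp, zq, zm t ht1 ht2]
          by_cases htp : p < t
          · by_cases htq : t < q
            · have hnz := Hz hu t htp htq
              have hnb := Hb t htp htq
              have hne_q : a t ≠ a q := hdq t ht2 hnz
              split_ifs <;> omega
            · have hqt : q < t := by
                rcases lt_or_eq_of_le (not_lt.mp htq) with h | h
                · exact h
                · exact absurd h.symm ht2
              split_ifs <;> omega
          · have hqt : ¬ q < t := fun h => htp (lt_trans hpq h)
            split_ifs <;> omega
    rw [Finset.sum_congr rfl (fun t _ => mid t), Finset.sum_boole]
    rw [show Finset.univ.filter (fun t : Fin n => p < t ∧ t < q) = Finset.Ioo p q by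
      ext t; simp [Finset.mem_Ioo]]
    rw [Fin.card_Ioo]
    simp only [hu, if_true]
    have h5 : p.val + 1 ≤ q.val := hpq
    omega
  · rw [sum_pair_outside (fun t => ((gz z p t - gz a p t) + (gz z q t - gz a q t))) p q hpq' ?mid2]
    case mid2 =>
      intro t ht1 ht2
      show (gz z p t - gz a p t) + (gz z q t - gz a q t) = 0
      unfold gz
      rw [zp, zq, zm t ht1 ht2]
      have h2 : a t ≠ 0 → a t ≠ a q := fun h => hdq t ht2 h
      have h1 : a t ≠ 0 → a t ≠ a p := fun h => hdp t ht1 h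
      by_cases htp : p < t
      · by_cases htq : t < q
        · have hnb := Hb t htp htq
          rcases Nat.eq_zero_or_pos (a t) with h0 | h0
          · split_ifs <;> omega
          · have hne_q := h2 (by omega)
            have hne_p := h1 (by omega)
            split_ifs <;> omega
        · have hqt : q < t := by
            rcases lt_or_eq_of_le (not_lt.mp htq) with h | h
            · exact h
            · exact absurd h.symm ht2
          split_ifs <;> omega
      · have hqt : ¬ q < t := fun h => htp (lt_trans hpq h)
        split_ifs <;> omega
    show ((gz z p p - gz a p p) + (gz z q p - gz a q p)) + ((gz z p q - gz a p q) + (gz z q q - gz a q q)) = _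
    unfold gz
    rw [zp, zq]
    have h1 : ¬ p < p := lt_irrefl p
    have h2 : ¬ q < q := lt_irrefl q
    have h3 : ¬ q < p := not_lt.mpr (le_of_lt hpq)
    split_ifs <;> omega

lemma lenSum_two {n : ℕ} (x y : Fin n → ℕ) (p q : Fin n) (hpq : p ≠ q)
    (h : ∀ m, m ≠ p → m ≠ q → x m = y m) :
    (∑ i : Fin n, if x i ≠ 0 then ((x i : ℤ) + n - (i.val + 1)) else 0)
      - (∑ i : Fin n, if y i ≠ 0 then ((y i : ℤ) + n - (i.val + 1)) else 0)
    = ((if x p ≠ 0 then ((x p : ℤ) + n - (p.val + 1)) else 0)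
        - (if y p ≠ 0 then ((y p : ℤ) + n - (p.val + 1)) else 0))
      + ((if x q ≠ 0 then ((x q : ℤ) + n - (q.val + 1)) else 0)
        - (if y q ≠ 0 then ((y q : ℤ) + n - (q.val + 1)) else 0)) := by
  rw [← Finset.sum_sub_distrib]
  exact sum_pair_outside _ p q hpq (fun m h1 h2 => by rw [h m h1 h2]; ring)

lemma rookLen_swap {n : ℕ} (a : Fin n → ℕ) (ha : IsRook n a) (p q : Fin n) (hpq : p < q)
    (huc : a p < a q)
    (Hb : ∀ m : Fin n, p < m → m < q → ¬(a p < a m ∧ a m < a q))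
    (Hz : a p = 0 → ∀ m : Fin n, p < m → m < q → a m ≠ 0) :
    rookLen n (fun m => a (Equiv.swap p q m)) = rookLen n a + 1 := by
  set z : Fin n → ℕ := fun m => a (Equiv.swap p q m) with hz
  have hpq' : p ≠ q := ne_of_lt hpq
  have zp : z p = a q := by rw [hz]; simp [Equiv.swap_apply_left]
  have zq : z q = a p := by rw [hz]; simp [Equiv.swap_apply_right]
  have zm : ∀ m, m ≠ p → m ≠ q → z m = a m := by
    intro m h1 h2; rw [hz]; simp [Equiv.swap_apply_of_ne_of_ne h1 h2]
  have hco := coinv_swap a ha p q hpq huc Hb Hz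
  rw [← hz] at hco
  have hls := lenSum_two z a p q hpq' zm
  rw [zp, zq] at hls
  unfold rookLen
  have hq1 : (q.val : ℤ) + 1 ≤ n := by
    have := q.isLt; omega
  have hp1 : (p.val : ℤ) < q.val := by exact_mod_cast hpq
  have hcq : a q ≠ 0 := by omega
  by_cases hu : a p = 0
  · rw [if_pos hu] at hco
    simp only [hu] at hls
    simp only [ne_eq, not_true_eq_false, if_false, hcq, not_false_eq_true, if_true] at hls
    simp only [ne_eq]
    omega
  · rw [if_neg hu] at hco
    simp only [ne_eq, hu, hcq, not_false_eq_true, if_true] at hls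
    simp only [ne_eq]
    omega

lemma sum_single_outside {n : ℕ} (d : Fin n → ℤ) (p : Fin n)
    (h : ∀ m, m ≠ p → d m = 0) :
    ∑ m : Fin n, d m = d p := by
  rw [← Finset.sum_singleton d p]
  exact (Finset.sum_subset (Finset.subset_univ _) (fun m _ hm => by
    simp only [Finset.mem_singleton] at hm
    exact h m hm)).symm

lemma card_between {n : ℕ} (a : Fin n → ℕ) (ha : IsRook n a) (p : Fin n) (u v : ℕ)
    (hu : a p = u)
    (R1 : ∀ w, u < w → w < v → ∃ m : Fin n, m < p ∧ a m = w) :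
    (Finset.univ.filter (fun s : Fin n => s < p ∧ u < a s ∧ a s < v)).card
      = v - u - 1 := by
  rw [← Nat.card_Ioo]
  apply Finset.card_bij (fun s _ => a s)
  · intro s hs
    simp only [Finset.mem_filter] at hs
    rw [Finset.mem_Ioo]
    exact ⟨hs.2.2.1, hs.2.2.2⟩
  · intro s1 h1 s2 h2 heq
    simp only [Finset.mem_filter] at h1 h2
    by_contra hne
    exact ha.2 s1 s2 hne (by omega) heq
  · intro w hw
    rw [Finset.mem_Ioo] at hw
    obtain ⟨m, hm1, hm2⟩ := R1 w hw.1 hw.2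
    exact ⟨m, Finset.mem_filter.mpr ⟨Finset.mem_univ _, hm1, by omega, by omega⟩, hm2⟩

lemma coinv_update {n : ℕ} (a : Fin n → ℕ) (ha : IsRook n a) (p : Fin n) (v : ℕ)
    (hv : a p < v)
    (R1 : ∀ w, a p < w → w < v → ∃ m : Fin n, m < p ∧ a m = w)
    (R2 : ∀ m : Fin n, p < m → ¬(a p < a m ∧ a m ≤ v))
    (R3 : a p = 0 → ∀ m : Fin n, p < m → v < a m)
    (R4 : ∀ m : Fin n, a m ≠ v) :
    (coinv n (Function.update a p v) : ℤ) - coinv n a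
      = ((v : ℤ) - a p - 1) + (if a p = 0 then ((n : ℤ) - p.val - 1) else 0) := by
  set z : Fin n → ℕ := Function.update a p v with hz
  have zp : z p = v := by rw [hz]; simp
  have zm : ∀ m, m ≠ p → z m = a m := by
    intro m h1; rw [hz]; simp [Function.update_of_ne h1]
  have hdp : ∀ s, s ≠ p → a s ≠ 0 → a s ≠ a p := fun s h1 h2 => ha.2 s p h1 h2
  rw [coinv_int, coinv_int]
  rw [show (∑ s : Fin n, ∑ t : Fin n, gz z s t) - (∑ s : Fin n, ∑ t : Fin n, gz a s t)
      = ∑ s : Fin n, ∑ t : Fin n, (gz z s t - gz a s t) by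
    rw [← Finset.sum_sub_distrib]
    exact Finset.sum_congr rfl fun s _ => (Finset.sum_sub_distrib _ _).symm]
  have dzero : ∀ s t : Fin n, s ≠ p → t ≠ p → gz z s t - gz a s t = 0 := by
    intro s t h1 h3
    rw [show gz z s t = gz a s t by unfold gz; rw [zm s h1, zm t h3]]
    ring
  have rowp : (∑ t : Fin n, (gz z p t - gz a p t))
      = if a p = 0 then ((n : ℤ) - p.val - 1) else 0 := by
    have mid : ∀ t : Fin n, (gz z p t - gz a p t)
        = if a p = 0 then (if p < t then (1:ℤ) else 0) else 0 := by
      intro t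
      by_cases ht : t = p
      · subst ht; unfold gz; rw [zp]; split_ifs <;> omega
      · unfold gz
        rw [zp, zm t ht]
        by_cases htp : p < t
        · have h2 := R2 t htp
          by_cases hp0 : a p = 0
          · have h3 := R3 hp0 t htp
            split_ifs <;> omega
          · split_ifs <;> omega
        · split_ifs <;> omega
    rw [Finset.sum_congr rfl (fun t _ => mid t)]
    by_cases hp0 : a p = 0
    · simp only [hp0, if_true]
      rw [Finset.sum_boole]
      rw [show Finset.univ.filter (fun t : Fin n => p < t) = Finset.Ioi p by
        ext t; simp [Finset.mem_Ioi]]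
      rw [Fin.card_Ioi]
      have := p.isLt
      omega
    · simp [hp0]
  have colp : ∀ s : Fin n, s ≠ p → (∑ t : Fin n, (gz z s t - gz a s t))
      = if s < p ∧ a p < a s ∧ a s < v then (1:ℤ) else 0 := by
    intro s hs
    rw [sum_single_outside _ p (fun t ht => dzero s t hs ht)]
    unfold gz
    rw [zp, zm s hs]
    have h4 := R4 s
    by_cases hsp : s < p
    · rcases Nat.eq_zero_or_pos (a s) with h0 | h0
      · split_ifs <;> omega
      · by_cases hp0 : a p = 0
        · split_ifs <;> omega
        · have := hdp s hs (by omega)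
          split_ifs <;> omega
    · split_ifs <;> omega
  rw [Finset.sum_eq_sum_sdiff_singleton_add (Finset.mem_univ p)]
  rw [Finset.sum_congr rfl (fun s hs => colp s (by
    rw [Finset.mem_sdiff, Finset.mem_singleton] at hs; exact hs.2))]
  rw [rowp]
  have : (∑ s ∈ Finset.univ \ {p}, if s < p ∧ a p < a s ∧ a s < v then (1:ℤ) else 0)
      = ∑ s : Fin n, if s < p ∧ a p < a s ∧ a s < v then (1:ℤ) else 0 := by
    refine Finset.sum_subset (Finset.sdiff_subset) (fun s _ hs => ?_)
    have hsp : s = p := by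
      by_contra h
      exact hs (Finset.mem_sdiff.mpr ⟨Finset.mem_univ s, by simpa using h⟩)
    subst hsp
    simp [lt_irrefl]
  rw [this, Finset.sum_boole]
  rw [show Finset.univ.filter (fun s : Fin n => s < p ∧ a p < a s ∧ a s < v)
      = Finset.univ.filter (fun s : Fin n => s < p ∧ a p < a s ∧ a s < v) from rfl]
  rw [card_between a ha p (a p) v rfl R1]
  have hv' := hv
  split_ifs <;> omega

lemma rookLen_update {n : ℕ} (a : Fin n → ℕ) (ha : IsRook n a) (p : Fin n) (v : ℕ)
    (hv : a p < v)
    (R1 : ∀ w, a p < w → w < v → ∃ m : Fin n, m < p ∧ a m = w)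
    (R2 : ∀ m : Fin n, p < m → ¬(a p < a m ∧ a m ≤ v))
    (R3 : a p = 0 → ∀ m : Fin n, p < m → v < a m)
    (R4 : ∀ m : Fin n, a m ≠ v) :
    rookLen n (Function.update a p v) = rookLen n a + 1 := by
  set z : Fin n → ℕ := Function.update a p v with hz
  have zp : z p = v := by rw [hz]; simp
  have zm : ∀ m, m ≠ p → z m = a m := by
    intro m h1; rw [hz]; simp [Function.update_of_ne h1]
  have hco := coinv_update a ha p v hv R1 R2 R3 R4
  rw [← hz] at hco
  have hls : (∑ i : Fin n, if z i ≠ 0 then ((z i : ℤ) + n - (i.val + 1)) else 0)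
      - (∑ i : Fin n, if a i ≠ 0 then ((a i : ℤ) + n - (i.val + 1)) else 0)
    = ((if z p ≠ 0 then ((z p : ℤ) + n - (p.val + 1)) else 0)
        - (if a p ≠ 0 then ((a p : ℤ) + n - (p.val + 1)) else 0)) := by
    rw [← Finset.sum_sub_distrib]
    exact sum_single_outside _ p (fun m h1 => by rw [zm m h1]; ring)
  rw [zp] at hls
  have hvne : v ≠ 0 := by omega
  unfold rookLen
  have hp1 : p.val < n := p.isLt
  by_cases hu : a p = 0
  · rw [if_pos hu] at hco
    simp only [hu] at hls
    simp only [ne_eq, not_true_eq_false, if_false, hvne, not_false_eq_true, if_true] at hls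
    simp only [ne_eq]
    omega
  · rw [if_neg hu] at hco
    simp only [ne_eq, hu, hvne, not_false_eq_true, if_true] at hls
    simp only [ne_eq]
    omega

lemma cnt_diff_two {n : ℕ} (x y : Fin n → ℕ) (p q : Fin n) (hpq : p ≠ q)
    (h : ∀ m, m ≠ p → m ≠ q → x m = y m) (k t : ℕ) :
    (cnt x k t : ℤ) - cnt y k t
      = ((if p.val < k ∧ t ≤ x p then (1:ℤ) else 0) - (if p.val < k ∧ t ≤ y p then 1 else 0))
      + ((if q.val < k ∧ t ≤ x q then (1:ℤ) else 0) - (if q.val < k ∧ t ≤ y q then 1 else 0)) := by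
  unfold cnt
  rw [Finset.card_filter, Finset.card_filter]
  push_cast
  rw [← Finset.sum_sub_distrib]
  exact sum_pair_outside _ p q hpq (fun m h1 h2 => by rw [h m h1 h2]; ring)

lemma cnt_diff_one {n : ℕ} (x y : Fin n → ℕ) (p : Fin n)
    (h : ∀ m, m ≠ p → x m = y m) (k t : ℕ) :
    (cnt x k t : ℤ) - cnt y k t
      = ((if p.val < k ∧ t ≤ x p then (1:ℤ) else 0) - (if p.val < k ∧ t ≤ y p then 1 else 0)) := by
  unfold cnt
  rw [Finset.card_filter, Finset.card_filter]
  push_cast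
  rw [← Finset.sum_sub_distrib]
  exact sum_single_outside _ p (fun m h1 => by rw [h m h1]; ring)

lemma exists_step {n : ℕ} (a b : Fin n → ℕ) (ha : IsRook n a) (hb : IsRook n b)
    (i : Fin n) (hpre : ∀ k, k < i → a k = b k) (hlt : a i < b i)
    (hab : deodharLE n a b) :
    ∃ z : Fin n → ℕ, IsRook n z ∧ deodharLE n a z ∧ a ≠ z ∧ deodharLE n z b ∧
      rookLen n z = rookLen n a + 1 ∧ pprStep n a z := by
  have hcnt := (deodharLE_iff_cnt a b).mp hab
  by_cases hS : ∃ j : Fin n, i < j ∧ a i < a j ∧ a j ≤ b i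
  · -- Case A: swap
    obtain ⟨j, hij, hc1, hc2, hmin⟩ :
        ∃ j : Fin n, i < j ∧ a i < a j ∧ a j ≤ b i ∧
          ∀ m : Fin n, i < m → m < j → ¬(a i < a m ∧ a m ≤ b i) := by
      classical
      obtain ⟨j0, hj0⟩ := hS
      let J := Finset.univ.filter (fun j : Fin n => i < j ∧ a i < a j ∧ a j ≤ b i)
      have hJne : J.Nonempty := ⟨j0, Finset.mem_filter.mpr ⟨Finset.mem_univ _, hj0⟩⟩
      have hjJ := Finset.mem_filter.mp (J.min'_mem hJne)
      refine ⟨J.min' hJne, hjJ.2.1, hjJ.2.2.1, hjJ.2.2.2, ?_⟩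
      intro m h1 h2 h3
      exact absurd h2 (not_lt.mpr (J.min'_le m
        (Finset.mem_filter.mpr ⟨Finset.mem_univ _, h1, h3.1, h3.2⟩)))
    obtain ⟨p, hip, hpj, hap, hzp⟩ :
        ∃ p : Fin n, i ≤ p ∧ p < j ∧ a p = a i ∧
          (a i = 0 → ∀ m : Fin n, p < m → m < j → a m ≠ 0) := by
      by_cases hai : a i = 0
      · classical
        let P := Finset.univ.filter (fun m : Fin n => i ≤ m ∧ m < j ∧ a m = 0)
        have hPne : P.Nonempty :=
          ⟨i, Finset.mem_filter.mpr ⟨Finset.mem_univ _, le_refl i, hij, hai⟩⟩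
        have hmem := Finset.mem_filter.mp (P.max'_mem hPne)
        refine ⟨P.max' hPne, hmem.2.1, hmem.2.2.1, by rw [hmem.2.2.2, hai], ?_⟩
        intro _ m h1 h2 h3
        exact absurd h1 (not_lt.mpr (P.le_max' m (Finset.mem_filter.mpr
          ⟨Finset.mem_univ _, le_trans hmem.2.1 (le_of_lt h1), h2, h3⟩)))
      · exact ⟨i, le_refl i, hij, rfl, fun h => absurd h hai⟩
    have hpj' : p.val < j.val := hpj
    have hip' : i.val ≤ p.val := hip
    have huc : a p < a j := by rw [hap]; exact hc1
    have Hbb : ∀ m : Fin n, p < m → m < j → ¬(a p < a m ∧ a m < a j) := by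
      intro m h1 h2 h3
      exact hmin m (lt_of_le_of_lt hip h1) h2 ⟨by omega, by omega⟩
    have Hzz : a p = 0 → ∀ m : Fin n, p < m → m < j → a m ≠ 0 := by
      intro h m h1 h2
      exact hzp (by omega) m h1 h2
    set z : Fin n → ℕ := fun m => a (Equiv.swap p j m) with hzdef
    have hpjne : p ≠ j := ne_of_lt hpj
    have zp : z p = a j := by rw [hzdef]; simp [Equiv.swap_apply_left]
    have zq : z j = a p := by rw [hzdef]; simp [Equiv.swap_apply_right]
    have zm : ∀ m, m ≠ p → m ≠ j → z m = a m := by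
      intro m h1 h2; rw [hzdef]; simp [Equiv.swap_apply_of_ne_of_ne h1 h2]
    have hdiff : ∀ k t : ℕ, (cnt z k t : ℤ) - cnt a k t
        = ((if p.val < k ∧ t ≤ a j then (1:ℤ) else 0) - (if p.val < k ∧ t ≤ a p then 1 else 0))
        + ((if j.val < k ∧ t ≤ a p then (1:ℤ) else 0) - (if j.val < k ∧ t ≤ a j then 1 else 0)) := by
      intro k t
      have := cnt_diff_two z a p j hpjne (fun m h1 h2 => zm m h1 h2) k t
      rwa [zp, zq] at this
    refine ⟨z, ?_, ?_, ?_, ?_, ?_, ?_⟩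
    · exact ⟨fun m => ha.1 _, fun m m' hne h0 => ha.2 _ _ ((Equiv.swap p j).injective.ne hne) h0⟩
    · rw [deodharLE_iff_cnt]
      intro k hk t
      have h := hdiff k t
      have : (cnt a k t : ℤ) ≤ cnt z k t := by split_ifs at h <;> omega
      exact_mod_cast this
    · intro h
      have := congrFun h p
      rw [zp] at this
      omega
    · rw [deodharLE_iff_cnt]
      intro k hk t
      by_cases hcond : p.val < k ∧ ¬ j.val < k ∧ a p < t ∧ t ≤ a j
      · have hkj : k ≤ j.val := by omega
        have hstrict := strict_lemma a b i hpre hlt hcnt k t (by omega) hk (by omega)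
          (le_trans hcond.2.2.2 hc2)
          (fun m hm1 hm2 => hmin m hm1 (by rw [Fin.lt_def]; omega))
        have h := hdiff k t
        have : (cnt z k t : ℤ) = cnt a k t + 1 := by split_ifs at h <;> omega
        omega
      · have h := hdiff k t
        have h1 : (cnt z k t : ℤ) ≤ cnt a k t := by split_ifs at h <;> omega
        have h2 := hcnt k hk t
        omega
    · exact rookLen_swap a ha p j hpj huc Hbb Hzz
    · exact Or.inr ⟨p, j, hpj, zp, zq, huc, fun m h1 h2 => (zm m h1 h2).symm⟩
  · -- Case B: raise
    have hS' : ∀ m : Fin n, i < m → ¬(a i < a m ∧ a m ≤ b i) :=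
      fun m h1 h2 => hS ⟨m, h1, h2.1, h2.2⟩
    have hbn := hb.1 i
    obtain ⟨v, hv1, hv2, hv3, hvmin⟩ :
        ∃ v : ℕ, a i < v ∧ v ≤ b i ∧ (∀ m : Fin n, a m ≠ v) ∧
          ∀ w, a i < w → w < v → (w ≤ b i ∧ ∀ m : Fin n, a m ≠ w) → False := by
      classical
      let V := (Finset.range (n+1)).filter
        (fun v => a i < v ∧ v ≤ b i ∧ ∀ m : Fin n, a m ≠ v)
      have hbiV : b i ∈ V := by
        refine Finset.mem_filter.mpr ⟨Finset.mem_range.mpr (by omega), hlt, le_refl _, ?_⟩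
        intro m hm
        rcases lt_trichotomy m i with h | h | h
        · have hme := hpre m h
          have hbne : b m ≠ b i := hb.2 m i (ne_of_lt h) (by omega)
          exact hbne (by omega)
        · subst h; omega
        · exact hS' m h ⟨by omega, by omega⟩
      have hVne : V.Nonempty := ⟨b i, hbiV⟩
      have hvV := Finset.mem_filter.mp (V.min'_mem hVne)
      refine ⟨V.min' hVne, hvV.2.1, hvV.2.2.1, hvV.2.2.2, ?_⟩
      intro w hw1 hw2 hw3
      have hwV : w ∈ V := Finset.mem_filter.mpr
        ⟨Finset.mem_range.mpr (by omega), hw1, hw3.1, hw3.2⟩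
      have := V.min'_le w hwV
      omega
    have hvpos : ∀ w, a i < w → w < v → ∃ m : Fin n, m < i ∧ a m = w := by
      intro w hw1 hw2
      have hex : ∃ m : Fin n, a m = w := by
        by_contra hno
        push_neg at hno
        exact hvmin w hw1 hw2 ⟨by omega, hno⟩
      obtain ⟨m, hm⟩ := hex
      refine ⟨m, ?_, hm⟩
      rcases lt_trichotomy m i with h | h | h
      · exact h
      · exfalso; subst h; omega
      · exfalso; exact hS' m h ⟨by omega, by omega⟩
    obtain ⟨p, hip, hap, hzp⟩ :
        ∃ p : Fin n, i ≤ p ∧ a p = a i ∧ (a i = 0 → ∀ m : Fin n, p < m → a m ≠ 0) := by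
      by_cases hai : a i = 0
      · classical
        let P := Finset.univ.filter (fun m : Fin n => i ≤ m ∧ a m = 0)
        have hPne : P.Nonempty :=
          ⟨i, Finset.mem_filter.mpr ⟨Finset.mem_univ _, le_refl i, hai⟩⟩
        have hmem := Finset.mem_filter.mp (P.max'_mem hPne)
        refine ⟨P.max' hPne, hmem.2.1, by rw [hmem.2.2, hai], ?_⟩
        intro _ m h1 h2
        exact absurd h1 (not_lt.mpr (P.le_max' m (Finset.mem_filter.mpr
          ⟨Finset.mem_univ _, le_trans hmem.2.1 (le_of_lt h1), h2⟩)))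
      · exact ⟨i, le_refl i, rfl, fun h => absurd h hai⟩
    have hip' : i.val ≤ p.val := hip
    have hvp : a p < v := by omega
    have R1 : ∀ w, a p < w → w < v → ∃ m : Fin n, m < p ∧ a m = w := by
      intro w h1 h2
      obtain ⟨m, hm1, hm2⟩ := hvpos w (by omega) h2
      exact ⟨m, lt_of_lt_of_le hm1 hip, hm2⟩
    have R2 : ∀ m : Fin n, p < m → ¬(a p < a m ∧ a m ≤ v) := by
      intro m h1 h2
      exact hS' m (lt_of_le_of_lt hip h1) ⟨by omega, by omega⟩
    have R3 : a p = 0 → ∀ m : Fin n, p < m → v < a m := by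
      intro h0 m h1
      have hmne := hzp (by omega) m h1
      have hS'' := hS' m (lt_of_le_of_lt hip h1)
      omega
    set z : Fin n → ℕ := Function.update a p v with hzdef
    have zp : z p = v := by rw [hzdef]; simp
    have zm : ∀ m, m ≠ p → z m = a m := by
      intro m h1; rw [hzdef]; simp [Function.update_of_ne h1]
    have hdiff : ∀ k t : ℕ, (cnt z k t : ℤ) - cnt a k t
        = ((if p.val < k ∧ t ≤ v then (1:ℤ) else 0) - (if p.val < k ∧ t ≤ a p then 1 else 0)) := by
      intro k t
      have := cnt_diff_one z a p (fun m h1 => zm m h1) k t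
      rwa [zp] at this
    refine ⟨z, ?_, ?_, ?_, ?_, ?_, ?_⟩
    · constructor
      · intro m
        by_cases hm : m = p
        · subst hm; rw [zp]; omega
        · rw [zm m hm]; exact ha.1 m
      · intro m m' hne h0
        by_cases hm : m = p
        · subst hm
          rw [zp] at h0 ⊢
          rw [zm m' (Ne.symm hne)]
          exact fun h => hv3 m' h.symm
        · rw [zm m hm] at h0 ⊢
          by_cases hm' : m' = p
          · subst hm'; rw [zp]; exact hv3 m
          · rw [zm m' hm']; exact ha.2 m m' hne h0
    · rw [deodharLE_iff_cnt]
      intro k hk t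
      have h := hdiff k t
      have : (cnt a k t : ℤ) ≤ cnt z k t := by split_ifs at h <;> omega
      exact_mod_cast this
    · intro h
      have := congrFun h p
      rw [zp] at this
      omega
    · rw [deodharLE_iff_cnt]
      intro k hk t
      by_cases hcond : p.val < k ∧ a p < t ∧ t ≤ v
      · have hstrict := strict_lemma a b i hpre hlt hcnt k t (by omega) hk (by omega)
          (by omega) (fun m hm1 _ => hS' m hm1)
        have h := hdiff k t
        have : (cnt z k t : ℤ) = cnt a k t + 1 := by split_ifs at h <;> omega
        omega
      · have h := hdiff k t
        have h1 : (cnt z k t : ℤ) ≤ cnt a k t := by split_ifs at h <;> omega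
        have h2 := hcnt k hk t
        omega
    · exact rookLen_update a ha p v hvp R1 R2 R3 hv3
    · exact Or.inl ⟨p, by rw [zp]; omega, fun m hm => (zm m hm).symm⟩

end DCP

theorem deodhar_cover_is_ppr (n : ℕ) (a b : Fin n → ℕ) (ha : IsRook n a) (hb : IsRook n b)
    (i : Fin n) (hpre : ∀ k, k < i → a k = b k) (hlt : a i < b i)
    (hcov : deodharCovers n a b) :
    rookLen n b = rookLen n a + 1 ∧ pprStep n a b := by
  obtain ⟨hab, hne, hnz⟩ := hcov
  obtain ⟨z, hz1, hz2, hz3, hz4, hz5, hz6⟩ := DCP.exists_step a b ha hb i hpre hlt hab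
  have hzb : z = b := by
    by_contra h
    exact hnz ⟨z, hz1, hz2, hz3, hz4, h⟩
  subst hzb
  exact ⟨hz5, hz6⟩
end
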